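/- Let (R,m) be a Noetherian local complete domain, I an ideal of R, h ∈ ℕ, and x = x_1,…,x_h ∈ I an R-regular sequence such that √((x_1,…,x_h)R) is strictly contained in √I. Then the ideal J_{x,I} := {r ∈ R : for every l ∈ ℕ there exists s ∈ ℕ with r·I^s ⊆ (x_1^l,…,x_h^l)R} is zero. -/

import Mathlib

/-- The ideal `J_{x,I} = {r ∈ R | ∀ l ∃ s, r·Iˢ ⊆ (x₁ˡ,…,x_hˡ)R}`. -/
def Jideal {R : Type} [CommRing R] (I : Ideal R) {h : ℕ} (x : Fin h → R) : Ideal R where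
  carrier := {r : R | ∀ l : ℕ, ∃ s : ℕ, ∀ a ∈ I ^ s,
    r * a ∈ Ideal.span (Set.range fun i => x i ^ l)}
  zero_mem' := fun l => ⟨0, fun a _ => by simp [Ideal.zero_mem]⟩
  add_mem' := by
    intro r r' hr hr' l
    obtain ⟨s, hs⟩ := hr l
    obtain ⟨s', hs'⟩ := hr' l
    refine ⟨max s s', fun a ha => ?_⟩
    have h1 : a ∈ I ^ s := Ideal.pow_le_pow_right (le_max_left s s') ha
    have h2 : a ∈ I ^ s' := Ideal.pow_le_pow_right (le_max_right s s') ha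
    simpa [add_mul] using Ideal.add_mem _ (hs a h1) (hs' a h2)
  smul_mem' := by
    intro c r hr l
    obtain ⟨s, hs⟩ := hr l
    exact ⟨s, fun a ha => by
      simpa [smul_eq_mul, mul_assoc] using Ideal.mul_mem_left _ c (hs a ha)⟩

/-- Let `(R, m)` be a noetherian local complete domain, `I` an ideal of
`R`, `h ∈ ℕ`, and `x = x₁,…,x_h ∈ I` an `R`-regular sequence such that
`√((x₁,…,x_h)R)` is strictly contained in `√I`.  Then the ideal
`J_{x,I} = {r ∈ R | ∀ l ∃ s, r·Iˢ ⊆ (x₁ˡ,…,x_hˡ)R}` is zero. -/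
theorem stmt14 {R : Type} [CommRing R] [IsDomain R] [IsNoetherianRing R] [IsLocalRing R]
    [IsAdicComplete (IsLocalRing.maximalIdeal R) R]
    (I : Ideal R) (h : ℕ) (x : Fin h → R) (hxI : ∀ i, x i ∈ I)
    (hreg : RingTheory.Sequence.IsRegular R (List.ofFn x))
    (hlt : (Ideal.span (Set.range x)).radical < I.radical) :
    Jideal I x = ⊥ := by
  set K : Ideal R := Ideal.span (Set.range x) with hK
  -- obtain y ∈ I with y ∉ √K
  obtain ⟨z, hzI, hzK⟩ := SetLike.exists_of_lt hlt
  obtain ⟨n, hn⟩ := Ideal.mem_radical_iff.mp hzI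
  set y : R := z ^ n with hy
  have hyI : y ∈ I := hn
  have hyK : y ∉ K.radical := by
    intro hmem
    obtain ⟨m, hm⟩ := Ideal.mem_radical_iff.mp hmem
    exact hzK (Ideal.mem_radical_iff.mpr ⟨n * m, by rwa [pow_mul]⟩)
  have hy0 : y ≠ 0 := fun h0 => hyK (h0 ▸ K.radical.zero_mem)
  -- localize away from y
  set M : Submonoid R := Submonoid.powers y with hM
  have hMle : M ≤ nonZeroDivisors R := by
    intro m hm
    obtain ⟨k, rfl⟩ := hm
    exact pow_mem (mem_nonZeroDivisors_of_ne_zero hy0) k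
  set S := Localization M with hS
  have hinj : Function.Injective (algebraMap R S) := IsLocalization.injective S hMle
  haveI : IsDomain S := IsLocalization.isDomain_of_le_nonZeroDivisors (S := S) hMle
  haveI : IsNoetherianRing S := IsLocalization.isNoetherianRing M S inferInstance
  set K' : Ideal S := Ideal.map (algebraMap R S) K with hK'
  have hK'top : K' ≠ ⊤ := by
    intro htop
    have h1 : (1 : S) ∈ K' := htop ▸ Submodule.mem_top
    obtain ⟨⟨a, m⟩, hm⟩ := (IsLocalization.mem_map_algebraMap_iff M S).mp h1
    rw [one_mul] at hm
    have : (m : R) = (a : R) := hinj hm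
    obtain ⟨k, hk⟩ := m.2
    have hk' : y ^ k = (m : R) := hk
    exact hyK (Ideal.mem_radical_iff.mpr ⟨k, by rw [hk', this]; exact a.2⟩)
  have hKrull : ⨅ i : ℕ, K' ^ i = ⊥ := Ideal.iInf_pow_eq_bot_of_isDomain K' hK'top
  -- main argument
  ext r
  simp only [Ideal.mem_bot]
  constructor
  · intro hr
    have hr0 : algebraMap R S r = 0 := by
      rw [← Ideal.mem_bot, ← hKrull, Ideal.mem_iInf]
      intro l
      obtain ⟨s, hs⟩ := hr l
      have hys : y ^ s ∈ I ^ s := Ideal.pow_mem_pow hyI s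
      have hrl : r * y ^ s ∈ Ideal.span (Set.range fun i => x i ^ l) := hs _ hys
      have hsub : Ideal.span (Set.range fun i => x i ^ l) ≤ K ^ l := by
        rw [Ideal.span_le]
        rintro _ ⟨i, rfl⟩
        exact Ideal.pow_mem_pow (Ideal.subset_span (Set.mem_range_self i)) l
      have h1 : algebraMap R S (r * y ^ s) ∈ K' ^ l := by
        rw [hK', ← Ideal.map_pow]
        exact Ideal.mem_map_of_mem _ (hsub hrl)
      have hu : IsUnit (algebraMap R S (y ^ s)) :=
        IsLocalization.map_units (M := M) S ⟨y ^ s, pow_mem (Submonoid.mem_powers y) s⟩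
      obtain ⟨u, hu⟩ := hu
      have : algebraMap R S r = algebraMap R S (r * y ^ s) * ↑u⁻¹ := by
        rw [map_mul, ← hu, mul_assoc, u.mul_inv, mul_one]
      rw [this]
      exact Ideal.mul_mem_right _ _ h1
    have := hinj (by rw [hr0, map_zero] : algebraMap R S r = algebraMap R S 0)
    exact this
  · rintro rfl
    exact (Jideal I x).zero_mem
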